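/- Let τ(X) = -P·Xᵀ·P⁻¹ on sl(3,ℂ) with P = [[0,1,0],[-1,0,0],[0,0,1]]. Define the four subspaces of sl(3,ℂ): g₀ = { block matrices [[x,0],[0,0]] with x a trace-zero 2×2 complex matrix }, g₂ = ℂ·Y where Y = (i/3)·diag(1,1,-2), g₋₁ = { [[0,0,-ia],[0,0,b],[-ib,a,0]] : a,b ∈ ℂ }, and g₁ = { [[0,0,ia],[0,0,b],[ib,a,0]] : a,b ∈ ℂ }. Then sl(3,ℂ) is the internal direct sum g₀ ⊕ g₂ ⊕ g₋₁ ⊕ g₁, and τ acts on g₀, g₂, g₋₁, g₁ as multiplication by 1, -1, -i, i respectively. -/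
import Mathlib


open Matrix

noncomputable section

/-- The matrix `P = [[0,1,0],[-1,0,0],[0,0,1]]`. -/
def Pmat : Matrix (Fin 3) (Fin 3) ℂ := !![0,1,0; -1,0,0; 0,0,1]

/-- `τ(X) = -P ⬝ Xᵀ ⬝ P⁻¹`. -/
def tauLie (X : Matrix (Fin 3) (Fin 3) ℂ) : Matrix (Fin 3) (Fin 3) ℂ :=
  -(Pmat * Xᵀ * Pmat⁻¹)

/-- `Y = (i/3)·diag(1,1,-2)`. -/
def Ymat : Matrix (Fin 3) (Fin 3) ℂ := (Complex.I / 3) • !![1,0,0; 0,1,0; 0,0,-2]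

/-- `g₀`: trace-zero 2×2 blocks in the upper left corner. -/
def g0 : Set (Matrix (Fin 3) (Fin 3) ℂ) :=
  {X | ∃ x : Matrix (Fin 2) (Fin 2) ℂ, x.trace = 0 ∧
    X = !![x 0 0, x 0 1, 0; x 1 0, x 1 1, 0; 0, 0, 0]}

/-- `g₂ = ℂ·Y`. -/
def g2 : Set (Matrix (Fin 3) (Fin 3) ℂ) := {X | ∃ c : ℂ, X = c • Ymat}

/-- `g₋₁ = { [[0,0,-ia],[0,0,b],[-ib,a,0]] : a,b ∈ ℂ }`. -/
def gm1 : Set (Matrix (Fin 3) (Fin 3) ℂ) :=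
  {X | ∃ a b : ℂ,
    X = !![0, 0, -(Complex.I * a); 0, 0, b; -(Complex.I * b), a, 0]}

/-- `g₁ = { [[0,0,ia],[0,0,b],[ib,a,0]] : a,b ∈ ℂ }`. -/
def g1 : Set (Matrix (Fin 3) (Fin 3) ℂ) :=
  {X | ∃ a b : ℂ,
    X = !![0, 0, Complex.I * a; 0, 0, b; Complex.I * b, a, 0]}

lemma Pmat_inv : Pmat⁻¹ = !![0,-1,0; 1,0,0; 0,0,1] := by
  apply inv_eq_right_inv
  ext i j
  fin_cases i <;> fin_cases j <;>
    simp [Pmat, Matrix.mul_apply, Fin.sum_univ_succ]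

lemma g2_eq (c : ℂ) : c • Ymat =
    !![c * Complex.I / 3, 0, 0; 0, c * Complex.I / 3, 0; 0, 0, -(2 * c * Complex.I / 3)] := by
  ext i j
  fin_cases i <;> fin_cases j <;> simp [Ymat, Matrix.vecHead, Matrix.vecTail] <;> ring

lemma tauLie_eq (X : Matrix (Fin 3) (Fin 3) ℂ) :
    tauLie X = !![-(X 1 1), X 0 1, -(X 2 1); X 1 0, -(X 0 0), X 2 0;
      -(X 1 2), X 0 2, -(X 2 2)] := by
  unfold tauLie
  rw [Pmat_inv]
  ext i j
  fin_cases i <;> fin_cases j <;>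
    simp [Pmat, Matrix.mul_apply, vecMul, dotProduct, Fin.sum_univ_succ]

set_option maxHeartbeats 2000000 in
theorem eigenspace_decomposition_sl3 :
    -- each subspace is contained in sl(3,ℂ)
    (∀ X ∈ g0, X.trace = 0) ∧ (∀ X ∈ g2, X.trace = 0) ∧
    (∀ X ∈ gm1, X.trace = 0) ∧ (∀ X ∈ g1, X.trace = 0) ∧
    -- internal direct sum: unique decomposition of every element of sl(3,ℂ)
    (∀ X : Matrix (Fin 3) (Fin 3) ℂ, X.trace = 0 →
      ∃! p : g0 × g2 × gm1 × g1,
        (p.1 : Matrix (Fin 3) (Fin 3) ℂ) + p.2.1 + p.2.2.1 + p.2.2.2 = X) ∧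
    -- τ acts by 1, -1, -i, i respectively
    (∀ X ∈ g0, tauLie X = X) ∧
    (∀ X ∈ g2, tauLie X = -X) ∧
    (∀ X ∈ gm1, tauLie X = -(Complex.I • X)) ∧
    (∀ X ∈ g1, tauLie X = Complex.I • X) := by
  have hI : Complex.I ^ 2 = -1 := Complex.I_sq
  refine ⟨?_, ?_, ?_, ?_, ?_, ?_, ?_, ?_, ?_⟩
  · rintro X ⟨x, hx, rfl⟩
    rw [Matrix.trace_fin_two] at hx
    simp [Matrix.trace_fin_three, Matrix.vecHead, Matrix.vecTail]
    linear_combination hx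
  · rintro X ⟨c, rfl⟩
    simp [Matrix.trace_fin_three, Ymat, Matrix.vecHead, Matrix.vecTail]
    ring
  · rintro X ⟨a, b, rfl⟩
    simp [Matrix.trace_fin_three, Matrix.vecHead, Matrix.vecTail]
  · rintro X ⟨a, b, rfl⟩
    simp [Matrix.trace_fin_three, Matrix.vecHead, Matrix.vecTail]
  · intro X hX
    rw [Matrix.trace_fin_three] at hX
    have hxt : (!![X 0 0 + X 2 2 / 2, X 0 1; X 1 0, X 1 1 + X 2 2 / 2] :
        Matrix (Fin 2) (Fin 2) ℂ).trace = 0 := by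
      rw [Matrix.trace_fin_two]
      simp
      linear_combination hX
    refine ⟨⟨⟨_, !![X 0 0 + X 2 2 / 2, X 0 1; X 1 0, X 1 1 + X 2 2 / 2], hxt, rfl⟩,
      ⟨_, 3 * Complex.I / 2 * X 2 2, rfl⟩,
      ⟨_, (X 2 1 + Complex.I * X 0 2) / 2, (X 1 2 + Complex.I * X 2 0) / 2, rfl⟩,
      ⟨_, (X 2 1 - Complex.I * X 0 2) / 2, (X 1 2 - Complex.I * X 2 0) / 2, rfl⟩⟩, ?_, ?_⟩
    · ext i j
      fin_cases i <;> fin_cases j <;>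
        simp [Ymat, Matrix.vecHead, Matrix.vecTail] <;>
        first
          | ring1
          | linear_combination (X 2 2 / 2) * hI
          | linear_combination (-(X 2 2)) * hI
          | linear_combination (-(X 0 2)) * hI
          | linear_combination (-(X 2 0)) * hI
    · rintro ⟨⟨A, y, hy, rfl⟩, ⟨B, c, rfl⟩, ⟨C, a, b, rfl⟩, ⟨D, a', b', rfl⟩⟩ heq
      simp only [Prod.mk.injEq, Subtype.mk.injEq]
      have e : ∀ i j, _ := fun i j => congrFun (congrFun heq i) j
      have e00 := e 0 0; have e01 := e 0 1; have e02 := e 0 2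
      have e10 := e 1 0; have e11 := e 1 1; have e12 := e 1 2
      have e20 := e 2 0; have e21 := e 2 1; have e22 := e 2 2
      simp [Ymat, Matrix.vecHead, Matrix.vecTail] at e00 e01 e02 e10 e11 e12 e20 e21 e22
      have hc : c = 3 * Complex.I / 2 * X 2 2 := by
        linear_combination (3 * Complex.I / 2) * e22 + c * hI
      have ha : a = (X 2 1 + Complex.I * X 0 2) / 2 := by
        linear_combination (1/2) * e21 + (Complex.I / 2) * e02 + ((a - a') / 2) * hI
      have ha' : a' = (X 2 1 - Complex.I * X 0 2) / 2 := by
        linear_combination (1/2) * e21 - (Complex.I / 2) * e02 + ((a' - a) / 2) * hI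
      have hb : b = (X 1 2 + Complex.I * X 2 0) / 2 := by
        linear_combination (1/2) * e12 + (Complex.I / 2) * e20 + ((b - b') / 2) * hI
      have hb' : b' = (X 1 2 - Complex.I * X 2 0) / 2 := by
        linear_combination (1/2) * e12 - (Complex.I / 2) * e20 + ((b' - b) / 2) * hI
      refine ⟨?_, by rw [hc], by rw [ha, hb], by rw [ha', hb']⟩
      ext i j
      fin_cases i <;> fin_cases j <;>
        simp [Matrix.vecHead, Matrix.vecTail] <;>
        first
          | rfl
          | exact e01
          | exact e10
          | linear_combination e00 + (1/2) * e22
          | linear_combination e11 + (1/2) * e22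
  · rintro X ⟨x, hx, rfl⟩
    rw [tauLie_eq]
    rw [Matrix.trace_fin_two] at hx
    ext i j
    fin_cases i <;> fin_cases j <;> simp [Matrix.vecHead, Matrix.vecTail] <;>
      first | ring1 | linear_combination hx | linear_combination -hx
  · rintro X ⟨c, rfl⟩
    rw [g2_eq, tauLie_eq]
    ext i j
    fin_cases i <;> fin_cases j <;> simp [Matrix.vecHead, Matrix.vecTail] <;> ring
  · rintro X ⟨a, b, rfl⟩
    rw [tauLie_eq]
    ext i j
    fin_cases i <;> fin_cases j <;> simp [Matrix.vecHead, Matrix.vecTail] <;>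
      first | ring1 | linear_combination (-a) * hI | linear_combination (-b) * hI
  · rintro X ⟨a, b, rfl⟩
    rw [tauLie_eq]
    ext i j
    fin_cases i <;> fin_cases j <;> simp [Matrix.vecHead, Matrix.vecTail] <;>
      first | ring1 | linear_combination (-a) * hI | linear_combination (-b) * hI
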